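/- Let d ≥ 2 and let V : ℝ^d → ℝ be C^∞ satisfying: (i) V(−x) = V(x) for all x; (ii) there is an orthogonal d×d matrix M such that V(M S_θ M⁻¹ x) = V(x) for all x ∈ ℝ^d and all θ ∈ ℝ, where S_θ is the rotation by angle θ in the first two coordinates (block-diagonal matrix with the 2×2 rotation by θ and the (d−2)×(d−2) identity). Let L₀ be the plane spanned by M e₁ and M e₂, let x₀ ∈ L₀ and c ≥ 0 be such that ∇V(x₀) = c·x₀. Then the curve x^t = M S_{√c·t} M⁻¹ x₀, ξ^t = √c · M S_{√c·t + π/2} M⁻¹ x₀ satisfies the Hamilton equations (d/dt)x^t = ξ^t and (d/dt)ξ^t = −∇V(x^t) for all t ∈ ℝ, with initial data x⁰ = x₀ and ξ⁰ = √c·M S_{π/2} M⁻¹ x₀; moreover |x^t| = |x₀| for all t ∈ ℝ. -/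

import Mathlib

noncomputable section

/-- The rotation by angle `θ` in the first two coordinates of `ℝ^d` (identity on the other
coordinates). -/
def Srot (d : ℕ) (hd : 2 ≤ d) (θ : ℝ) (x : EuclideanSpace ℝ (Fin d)) :
    EuclideanSpace ℝ (Fin d) :=
  WithLp.toLp 2 fun i : Fin d =>
    if (i : ℕ) = 0 then
      Real.cos θ * x ⟨0, by omega⟩ + Real.sin θ * x ⟨1, by omega⟩
    else if (i : ℕ) = 1 then
      -Real.sin θ * x ⟨0, by omega⟩ + Real.cos θ * x ⟨1, by omega⟩
    else x i

section Aux

variable {d : ℕ} (hd : 2 ≤ d)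

lemma srot_map_add (θ : ℝ) (x y : EuclideanSpace ℝ (Fin d)) :
    Srot d hd θ (x + y) = Srot d hd θ x + Srot d hd θ y := by
  ext i
  simp only [Srot, PiLp.add_apply, PiLp.toLp_apply]
  split_ifs <;> ring

lemma srot_map_smul (θ : ℝ) (r : ℝ) (x : EuclideanSpace ℝ (Fin d)) :
    Srot d hd θ (r • x) = r • Srot d hd θ x := by
  ext i
  simp only [Srot, PiLp.smul_apply, smul_eq_mul, PiLp.toLp_apply]
  split_ifs <;> ring

lemma srot_comp (θ φ : ℝ) (x : EuclideanSpace ℝ (Fin d)) :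
    Srot d hd θ (Srot d hd φ x) = Srot d hd (θ + φ) x := by
  ext i
  simp only [Srot, PiLp.toLp_apply]
  norm_num
  split_ifs with h0 h1
  · rw [Real.cos_add, Real.sin_add]; ring
  · rw [Real.cos_add, Real.sin_add]; ring
  · rfl

lemma srot_zero (x : EuclideanSpace ℝ (Fin d)) : Srot d hd 0 x = x := by
  ext i
  simp only [Srot, Real.cos_zero, Real.sin_zero, PiLp.toLp_apply]
  split_ifs with h0 h1
  · rw [show (⟨0, by omega⟩ : Fin d) = i from Fin.ext h0.symm]
    simp
  · rw [show (⟨1, by omega⟩ : Fin d) = i from Fin.ext h1.symm]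
    simp
  · rfl

lemma srot_norm (θ : ℝ) (x : EuclideanSpace ℝ (Fin d)) :
    ‖Srot d hd θ x‖ = ‖x‖ := by
  have hne : (⟨0, by omega⟩ : Fin d) ≠ ⟨1, by omega⟩ := by
    simp [Fin.ext_iff]
  have key : ∑ i, ‖Srot d hd θ x i‖ ^ 2 = ∑ i, ‖x i‖ ^ 2 := by
    have hsub : ({⟨0, by omega⟩, ⟨1, by omega⟩} : Finset (Fin d)) ⊆ Finset.univ :=
      Finset.subset_univ _
    rw [← Finset.sum_sdiff hsub, ← Finset.sum_sdiff hsub]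
    congr 1
    · refine Finset.sum_congr rfl fun i hi => ?_
      simp only [Finset.mem_sdiff, Finset.mem_insert, Finset.mem_singleton] at hi
      have h0 : (i : ℕ) ≠ 0 := fun h => hi.2 (Or.inl (Fin.ext h))
      have h1 : (i : ℕ) ≠ 1 := fun h => hi.2 (Or.inr (Fin.ext h))
      simp [Srot, h0, h1]
    · rw [Finset.sum_pair hne, Finset.sum_pair hne]
      simp only [Srot, Real.norm_eq_abs, sq_abs, PiLp.toLp_apply]
      norm_num
      nlinarith [Real.sin_sq_add_cos_sq θ, sq_nonneg (x ⟨0, by omega⟩), sq_nonneg (x ⟨1, by omega⟩)]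
  rw [EuclideanSpace.norm_eq, EuclideanSpace.norm_eq, key]

/-- `Srot` as a linear isometry equivalence. -/
def SrotLI (θ : ℝ) : EuclideanSpace ℝ (Fin d) ≃ₗᵢ[ℝ] EuclideanSpace ℝ (Fin d) where
  toFun := Srot d hd θ
  invFun := Srot d hd (-θ)
  map_add' := srot_map_add hd θ
  map_smul' := srot_map_smul hd θ
  left_inv := fun x => by
    have : Srot d hd (-θ) (Srot d hd θ x) = x := by
      rw [srot_comp, neg_add_cancel, srot_zero]
    exact this
  right_inv := fun x => by
    have : Srot d hd θ (Srot d hd (-θ) x) = x := by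
      rw [srot_comp, add_neg_cancel, srot_zero]
    exact this
  norm_map' := srot_norm hd θ

@[simp] lemma SrotLI_apply (θ : ℝ) (x : EuclideanSpace ℝ (Fin d)) :
    SrotLI hd θ x = Srot d hd θ x := rfl

lemma srot_combo (θ a b : ℝ) :
    Srot d hd θ (a • EuclideanSpace.single (⟨0, by omega⟩ : Fin d) (1 : ℝ)
        + b • EuclideanSpace.single (⟨1, by omega⟩ : Fin d) (1 : ℝ))
      = (a * Real.cos θ + b * Real.sin θ) •
          EuclideanSpace.single (⟨0, by omega⟩ : Fin d) (1 : ℝ)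
        + (b * Real.cos θ - a * Real.sin θ) •
          EuclideanSpace.single (⟨1, by omega⟩ : Fin d) (1 : ℝ) := by
  ext i
  simp only [Srot, PiLp.add_apply, PiLp.smul_apply, EuclideanSpace.single_apply, PiLp.toLp_apply,
    smul_eq_mul, Fin.ext_iff]
  by_cases h0 : (i : ℕ) = 0 <;> by_cases h1 : (i : ℕ) = 1 <;>
    simp [h0, h1] <;> ring

/-- Gradient transforms naturally under a linear isometry equivalence leaving `V` invariant. -/
lemma gradient_isometry {E : Type*} [NormedAddCommGroup E] [InnerProductSpace ℝ E]
    [CompleteSpace E] (V : E → ℝ) (hV : Differentiable ℝ V) (A : E ≃ₗᵢ[ℝ] E)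
    (hinv : ∀ x, V (A x) = V x) (x : E) :
    gradient V (A x) = A (gradient V x) := by
  have hg : HasGradientAt V (gradient V x) x := (hV x).hasGradientAt
  rw [hasGradientAt_iff_hasFDerivAt] at hg
  -- derivative of V ∘ A.symm at A x
  have hAsymm : HasFDerivAt (fun z => V (A.symm z))
      (((InnerProductSpace.toDual ℝ E) (gradient V x)).comp
        (A.symm.toContinuousLinearEquiv : E →L[ℝ] E)) (A x) := by
    have h1 : HasFDerivAt (fun z : E => A.symm z)
        ((A.symm.toContinuousLinearEquiv : E →L[ℝ] E)) (A x) :=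
      (A.symm.toContinuousLinearEquiv : E →L[ℝ] E).hasFDerivAt
    have hg2 : HasFDerivAt V ((InnerProductSpace.toDual ℝ E) (gradient V x))
        ((fun z : E => A.symm z) (A x)) := by
      simpa [A.symm_apply_apply] using hg
    exact hg2.comp (A x) h1
  have hfun : (fun z => V (A.symm z)) = V := by
    funext z
    conv_rhs => rw [← A.apply_symm_apply z]
    rw [hinv]
  rw [hfun] at hAsymm
  have hCLM : (((InnerProductSpace.toDual ℝ E) (gradient V x)).comp
      (A.symm.toContinuousLinearEquiv : E →L[ℝ] E))
      = (InnerProductSpace.toDual ℝ E) (A (gradient V x)) := by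
    ext v
    simp only [ContinuousLinearMap.comp_apply, InnerProductSpace.toDual_apply_apply]
    have : (A.symm.toContinuousLinearEquiv : E →L[ℝ] E) v = A.symm v := rfl
    rw [this, ← A.inner_map_map (gradient V x) (A.symm v), A.apply_symm_apply]
  rw [hCLM] at hAsymm
  have : HasGradientAt V (A (gradient V x)) (A x) := by
    rw [hasGradientAt_iff_hasFDerivAt]; exact hAsymm
  exact this.gradient

end Aux

/-- Periodic circular orbits: for an even potential `V` invariant under the rotations
`M S_θ M⁻¹`, if `x₀` lies in the invariant plane `L₀ = span(M e₁, M e₂)` and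
`∇V(x₀) = c x₀` with `c ≥ 0`, then `xᵗ = M S_{√c t} M⁻¹ x₀`,
`ξᵗ = √c · M S_{√c t + π/2} M⁻¹ x₀` solves the Hamilton equations with initial data
`(x₀, √c · M S_{π/2} M⁻¹ x₀)`, and `|xᵗ| = |x₀|` for all `t`. -/
theorem stmt_12 (d : ℕ) (hd : 2 ≤ d)
    (V : EuclideanSpace ℝ (Fin d) → ℝ) (hVsmooth : ContDiff ℝ (⊤ : ℕ∞) V)
    (hVeven : ∀ x, V (-x) = V x)
    (M : EuclideanSpace ℝ (Fin d) ≃ₗᵢ[ℝ] EuclideanSpace ℝ (Fin d))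
    (hMV : ∀ (x : EuclideanSpace ℝ (Fin d)) (θ : ℝ), V (M (Srot d hd θ (M.symm x))) = V x)
    (x₀ : EuclideanSpace ℝ (Fin d))
    (hx₀ : x₀ ∈ Submodule.span ℝ
        {M (EuclideanSpace.single (⟨0, by omega⟩ : Fin d) (1 : ℝ)),
         M (EuclideanSpace.single (⟨1, by omega⟩ : Fin d) (1 : ℝ))})
    (c : ℝ) (hc : 0 ≤ c) (hgrad : gradient V x₀ = c • x₀) :
    (∀ t : ℝ,
      HasDerivAt (fun s : ℝ => M (Srot d hd (Real.sqrt c * s) (M.symm x₀)))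
        (Real.sqrt c • M (Srot d hd (Real.sqrt c * t + Real.pi / 2) (M.symm x₀))) t ∧
      HasDerivAt (fun s : ℝ => Real.sqrt c • M (Srot d hd (Real.sqrt c * s + Real.pi / 2) (M.symm x₀)))
        (-gradient V (M (Srot d hd (Real.sqrt c * t) (M.symm x₀)))) t ∧
      ‖M (Srot d hd (Real.sqrt c * t) (M.symm x₀))‖ = ‖x₀‖) ∧
    M (Srot d hd (Real.sqrt c * 0) (M.symm x₀)) = x₀ ∧
    Real.sqrt c • M (Srot d hd (Real.sqrt c * 0 + Real.pi / 2) (M.symm x₀)) =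
      Real.sqrt c • M (Srot d hd (Real.pi / 2) (M.symm x₀)) := by
  obtain ⟨a, b, hab⟩ := Submodule.mem_span_pair.mp hx₀
  set e0 : EuclideanSpace ℝ (Fin d) := EuclideanSpace.single (⟨0, by omega⟩ : Fin d) (1 : ℝ)
    with he0
  set e1 : EuclideanSpace ℝ (Fin d) := EuclideanSpace.single (⟨1, by omega⟩ : Fin d) (1 : ℝ)
    with he1
  have hy : M.symm x₀ = a • e0 + b • e1 := by
    rw [← hab]
    simp [map_add, map_smul]
  -- invariance of the gradient
  have hgradAll : ∀ θ : ℝ, gradient V (M (Srot d hd θ (M.symm x₀)))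
      = c • M (Srot d hd θ (M.symm x₀)) := by
    intro θ
    have hA : ∀ z, V ((M.symm.trans ((SrotLI hd θ).trans M)) z) = V z := by
      intro z
      simp only [LinearIsometryEquiv.trans_apply, SrotLI_apply]
      exact hMV z θ
    have := gradient_isometry V (hVsmooth.differentiable (by simp))
      (M.symm.trans ((SrotLI hd θ).trans M)) hA x₀
    simp only [LinearIsometryEquiv.trans_apply, SrotLI_apply] at this
    rw [this, hgrad, map_smul, srot_map_smul, map_smul]
  -- the orbit written in clean coordinates
  have key : ∀ θ : ℝ, M (Srot d hd θ (M.symm x₀))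
      = (a * Real.cos θ + b * Real.sin θ) • M e0
        + (b * Real.cos θ - a * Real.sin θ) • M e1 := by
    intro θ
    rw [hy, srot_combo, map_add, map_smul, map_smul]
  have hsqrt : Real.sqrt c * Real.sqrt c = c := Real.mul_self_sqrt hc
  set r := Real.sqrt c with hr
  refine ⟨fun t => ⟨?_, ?_, ?_⟩, ?_, ?_⟩
  · -- first Hamilton equation
    have hlin : HasDerivAt (fun s : ℝ => r * s) (r) t := by
      simpa using (hasDerivAt_id t).const_mul (r)
    have hcos : HasDerivAt (fun s : ℝ => Real.cos (r * s))
        (-Real.sin (r * t) * r) t :=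
      (Real.hasDerivAt_cos (r * t)).comp t hlin
    have hsin : HasDerivAt (fun s : ℝ => Real.sin (r * s))
        (Real.cos (r * t) * r) t :=
      (Real.hasDerivAt_sin (r * t)).comp t hlin
    have H : HasDerivAt
        (fun s : ℝ => (a * Real.cos (r * s) + b * Real.sin (r * s)) • M e0
          + (b * Real.cos (r * s) - a * Real.sin (r * s)) • M e1)
        ((a * (-Real.sin (r * t) * r)
            + b * (Real.cos (r * t) * r)) • M e0
          + (b * (-Real.sin (r * t) * r)
            - a * (Real.cos (r * t) * r)) • M e1) t :=
      (((hcos.const_mul a).add (hsin.const_mul b)).smul_const (M e0)).add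
        (((hcos.const_mul b).sub (hsin.const_mul a)).smul_const (M e1))
    simp only [key]
    convert H using 1
    rw [Real.cos_add_pi_div_two, Real.sin_add_pi_div_two]
    module
  · -- second Hamilton equation
    rw [hgradAll]
    have hlin2 : HasDerivAt (fun s : ℝ => r * s + Real.pi / 2) (r) t := by
      simpa using ((hasDerivAt_id t).const_mul (r)).add_const (Real.pi / 2)
    have hcos : HasDerivAt (fun s : ℝ => Real.cos (r * s + Real.pi / 2))
        (-Real.sin (r * t + Real.pi / 2) * r) t := by
      have := (Real.hasDerivAt_cos (r * t + Real.pi / 2)).comp t hlin2; exact this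
    have hsin : HasDerivAt (fun s : ℝ => Real.sin (r * s + Real.pi / 2))
        (Real.cos (r * t + Real.pi / 2) * r) t := by
      have := (Real.hasDerivAt_sin (r * t + Real.pi / 2)).comp t hlin2; exact this
    have H : HasDerivAt
        (fun s : ℝ => r •
          ((a * Real.cos (r * s + Real.pi / 2)
              + b * Real.sin (r * s + Real.pi / 2)) • M e0
            + (b * Real.cos (r * s + Real.pi / 2)
              - a * Real.sin (r * s + Real.pi / 2)) • M e1))
        (r •
          ((a * (-Real.sin (r * t + Real.pi / 2) * r)
              + b * (Real.cos (r * t + Real.pi / 2) * r)) • M e0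
            + (b * (-Real.sin (r * t + Real.pi / 2) * r)
              - a * (Real.cos (r * t + Real.pi / 2) * r)) • M e1)) t :=
      ((((hcos.const_mul a).add (hsin.const_mul b)).smul_const (M e0)).add
        (((hcos.const_mul b).sub (hsin.const_mul a)).smul_const (M e1))).const_smul
        (r)
    simp only [key]
    convert H using 1
    rw [Real.cos_add_pi_div_two, Real.sin_add_pi_div_two, ← hsqrt]
    module
  · -- norm conservation
    rw [M.norm_map, srot_norm, M.symm.norm_map]
  · rw [mul_zero, srot_zero, M.apply_symm_apply]
  · rw [mul_zero, zero_add]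

end
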